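/- For every finite simple graph G, the following chain of inequalities holds: |nucleus(G)| + |diadem(G)| ≤ 2·α(G) ≤ |corona(G)| + |core(G)| ≤ 2·α(G) + k, where k is the maximum cardinality of a set of pairwise vertex-distinct odd cycles of G. -/

import Mathlib

set_option linter.unusedSectionVars false
set_option maxHeartbeats 1000000


variable {V : Type*} [Fintype V] [DecidableEq V]

/-- `S` is an independent set of `G`. -/
def IsIndep (G : SimpleGraph V) (S : Set V) : Prop :=
  ∀ ⦃u⦄, u ∈ S → ∀ ⦃v⦄, v ∈ S → ¬ G.Adj u v

/-- The independence number `α(G)`: the maximum cardinality of an independent set. -/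
noncomputable def indepNum (G : SimpleGraph V) : ℕ :=
  sSup {n : ℕ | ∃ S : Set V, IsIndep G S ∧ S.ncard = n}

/-- `S` is a maximum independent set of `G`. -/
def IsMaxIndep (G : SimpleGraph V) (S : Set V) : Prop :=
  IsIndep G S ∧ ∀ T : Set V, IsIndep G T → T.ncard ≤ S.ncard

/-- The neighborhood `N(X)` of a set of vertices `X`. -/
def nbhdSet (G : SimpleGraph V) (X : Set V) : Set V :=
  {v | ∃ u ∈ X, G.Adj u v}

/-- The difference `d_G(X) = |X| - |N(X)|` of a vertex set `X`. -/
noncomputable def diffSet (G : SimpleGraph V) (X : Set V) : ℤ :=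
  (X.ncard : ℤ) - ((nbhdSet G X).ncard : ℤ)

/-- `I` is a critical independent set of `G`. -/
def IsCriticalIndep (G : SimpleGraph V) (I : Set V) : Prop :=
  IsIndep G I ∧ ∀ J : Set V, IsIndep G J → diffSet G J ≤ diffSet G I

/-- `I` is a maximum-cardinality critical independent set of `G`. -/
def IsMaxCriticalIndep (G : SimpleGraph V) (I : Set V) : Prop :=
  IsCriticalIndep G I ∧ ∀ J : Set V, IsCriticalIndep G J → J.ncard ≤ I.ncard

/-- `core(G)`: the intersection of all maximum independent sets of `G`. -/
def coreSet (G : SimpleGraph V) : Set V := ⋂₀ {S : Set V | IsMaxIndep G S}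

/-- `corona(G)`: the union of all maximum independent sets of `G`. -/
def coronaSet (G : SimpleGraph V) : Set V := ⋃₀ {S : Set V | IsMaxIndep G S}

/-- `ker(G)`: the intersection of all critical independent sets of `G`. -/
def kerSet (G : SimpleGraph V) : Set V := ⋂₀ {S : Set V | IsCriticalIndep G S}

/-- `diadem(G)`: the union of all critical independent sets of `G`. -/
def diademSet (G : SimpleGraph V) : Set V := ⋃₀ {S : Set V | IsCriticalIndep G S}

/-- `nucleus(G)`: the intersection of all maximum-cardinality critical independent
sets of `G`. -/
def nucleusSet (G : SimpleGraph V) : Set V := ⋂₀ {S : Set V | IsMaxCriticalIndep G S}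

/-- `C` is the vertex set of some odd cycle of `G`. -/
def IsOddCycleVertexSet (G : SimpleGraph V) (C : Set V) : Prop :=
  ∃ (v : V) (w : G.Walk v v), w.IsCycle ∧ Odd w.length ∧ {x | x ∈ w.support} = C

/-- The maximum cardinality of a set of pairwise vertex-distinct odd cycles of `G`,
i.e. the number of distinct vertex sets of odd cycles of `G`. -/
noncomputable def numVertexDistinctOddCycles (G : SimpleGraph V) : ℕ :=
  {C : Set V | IsOddCycleVertexSet G C}.ncard

/-- `E` is the edge set of some odd cycle of `G`. -/
def IsOddCycleEdgeSet (G : SimpleGraph V) (E : Set (Sym2 V)) : Prop :=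
  ∃ (v : V) (w : G.Walk v v), w.IsCycle ∧ Odd w.length ∧ {e | e ∈ w.edges} = E

/-- The number of (distinct) odd cycles of `G`, where a cycle is identified with
its edge set. -/
noncomputable def numOddCycles (G : SimpleGraph V) : ℕ :=
  {E : Set (Sym2 V) | IsOddCycleEdgeSet G E}.ncard

namespace ChainProof


variable {G : SimpleGraph V}

lemma mem_nbhd {X : Set V} {v : V} : v ∈ nbhdSet G X ↔ ∃ u ∈ X, G.Adj u v := Iff.rfl

lemma nbhd_mono {X Y : Set V} (h : X ⊆ Y) : nbhdSet G X ⊆ nbhdSet G Y := by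
  rintro v ⟨u, hu, ha⟩; exact ⟨u, h hu, ha⟩

lemma mem_nbhd_of_adj {X : Set V} {u v : V} (hu : u ∈ X) (h : G.Adj u v) :
    v ∈ nbhdSet G X := ⟨u, hu, h⟩

lemma indep_mono {X Y : Set V} (h : X ⊆ Y) (hY : IsIndep G Y) : IsIndep G X :=
  fun _ hu _ hv => hY (h hu) (h hv)

lemma indep_notmem_nbhd {J : Set V} (hJ : IsIndep G J) {v : V} (hv : v ∈ J) :
    v ∉ nbhdSet G J := by
  rintro ⟨u, hu, ha⟩; exact hJ hu hv ha

/-- the set of achievable independent-set sizes is nonempty and bounded -/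
lemma indepNum_spec :
    ∃ S : Set V, IsMaxIndep G S ∧ S.ncard = indepNum G := by
  have hne : ({n : ℕ | ∃ S : Set V, IsIndep G S ∧ S.ncard = n}).Nonempty :=
    ⟨0, ∅, fun u hu => absurd hu (Set.notMem_empty u), by simp⟩
  have hbdd : BddAbove {n : ℕ | ∃ S : Set V, IsIndep G S ∧ S.ncard = n} := by
    refine ⟨Fintype.card V, ?_⟩
    rintro n ⟨S, _, rfl⟩
    calc S.ncard ≤ (Set.univ : Set V).ncard := Set.ncard_le_ncard (Set.subset_univ S) (Set.toFinite _)
      _ = Fintype.card V := by simp [Set.ncard_univ]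
  obtain ⟨S, hS, hcard⟩ := Nat.sSup_mem hne hbdd
  refine ⟨S, ⟨hS, ?_⟩, hcard⟩
  intro T hT
  rw [hcard]
  exact le_csSup hbdd ⟨T, hT, rfl⟩

lemma ncard_le_indepNum {T : Set V} (hT : IsIndep G T) : T.ncard ≤ indepNum G := by
  obtain ⟨S, hS, hcard⟩ := (indepNum_spec (G := G))
  rw [← hcard]; exact hS.2 T hT

lemma IsMaxIndep.ncard_eq {S : Set V} (hS : IsMaxIndep G S) : S.ncard = indepNum G := by
  obtain ⟨S₀, hS₀, hcard⟩ := (indepNum_spec (G := G))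
  exact le_antisymm (ncard_le_indepNum hS.1) (hcard ▸ hS.2 S₀ hS₀.1)


variable {G : SimpleGraph V}

/-- Generic Hall-style matching: if every subset of `Src` has enough neighbours in `T`,
then there is an injection from `Src` into `T` along edges. -/
lemma exists_matching_of_cond {T Src : Set V}
    (hcond : ∀ s : Set V, s ⊆ Src → s.ncard ≤ (nbhdSet G s ∩ T).ncard) :
    ∃ f : V → V, Set.InjOn f Src ∧ ∀ x ∈ Src, f x ∈ T ∧ G.Adj x (f x) := by
  classical
  haveI : Finite ↥Src := (Set.toFinite Src).to_subtype
  haveI : Fintype ↥Src := Fintype.ofFinite _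
  have key := (Fintype.all_card_le_filter_rel_iff_exists_injective
      (fun (a : ↥Src) (b : V) => G.Adj ↑a b ∧ b ∈ T)).mp ?_
  · obtain ⟨f₀, hinj, hf₀⟩ := key
    refine ⟨fun v => if h : v ∈ Src then f₀ ⟨v, h⟩ else v, ?_, ?_⟩
    · intro a ha b hb hab
      simp only [dif_pos ha, dif_pos hb] at hab
      exact congrArg Subtype.val (hinj hab)
    · intro x hx
      simp only [dif_pos hx]
      exact ⟨(hf₀ ⟨x, hx⟩).2, (hf₀ ⟨x, hx⟩).1⟩
  · intro A
    set s : Finset V := A.image Subtype.val with hs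
    have hAcard : A.card = s.card := by
      rw [hs, Finset.card_image_of_injective _ Subtype.val_injective]
    have hsub : (↑s : Set V) ⊆ Src := by
      intro v hv
      simp only [hs, Finset.coe_image, Set.mem_image] at hv
      obtain ⟨a, _, rfl⟩ := hv; exact a.2
    have h1 := hcond (↑s) hsub
    rw [Set.ncard_coe_finset] at h1
    rw [hAcard]
    refine h1.trans ?_
    have hsub2 : (nbhdSet G (↑s) ∩ T : Set V) ⊆
        ↑({b | ∃ a ∈ A, G.Adj ↑a b ∧ b ∈ T} : Finset V) := by
      rintro v ⟨⟨u, hu, hadj⟩, hvT⟩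
      simp only [hs, Finset.coe_image, Set.mem_image] at hu
      obtain ⟨a, haA, rfl⟩ := hu
      simp only [Finset.coe_filter, Set.mem_setOf_eq, Finset.mem_filter]
      constructor
      · simp
      · exact ⟨a, haA, hadj, hvT⟩
    calc (nbhdSet G (↑s) ∩ T).ncard
        ≤ (↑({b | ∃ a ∈ A, G.Adj ↑a b ∧ b ∈ T} : Finset V) : Set V).ncard :=
          Set.ncard_le_ncard hsub2 (Set.toFinite _)
      _ = _ := Set.ncard_coe_finset _


variable {G : SimpleGraph V}


/-- basic exchange bound: an independent set disjoint from a maximum independent set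
has at least as many neighbours inside it. -/
lemma card_le_nbhd_inter {T X : Set V} (hT : IsMaxIndep G T) (hX : IsIndep G X)
    (hd : ∀ x ∈ X, x ∉ T) : X.ncard ≤ (nbhdSet G X ∩ T).ncard := by
  classical
  set N := nbhdSet G X with hN
  have hKindep : IsIndep G ((T \ N) ∪ X) := by
    intro u hu v hv hadj
    rcases hu with hu | hu <;> rcases hv with hv | hv
    · exact hT.1 hu.1 hv.1 hadj
    · exact hu.2 ⟨v, hv, hadj.symm⟩
    · exact hv.2 ⟨u, hu, hadj⟩
    · exact hX hu hv hadj
  have hdisj : Disjoint (T \ N) X := by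
    rw [Set.disjoint_right]
    intro x hx hx'
    exact hd x hx hx'.1
  have hcard : ((T \ N) ∪ X).ncard = (T \ N).ncard + X.ncard :=
    Set.ncard_union_eq hdisj (Set.toFinite _) (Set.toFinite _)
  have hle : ((T \ N) ∪ X).ncard ≤ T.ncard := hT.2 _ hKindep
  have hsplit : (T \ N).ncard + (T ∩ N).ncard = T.ncard := by
    rw [← Set.ncard_union_eq (Set.disjoint_of_subset_right Set.inter_subset_right
      Set.disjoint_sdiff_left) (Set.toFinite _) (Set.toFinite _)]
    congr 1
    ext v; by_cases hv : v ∈ N <;> simp [hv]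
  have : (T \ N).ncard + X.ncard ≤ (T \ N).ncard + (T ∩ N).ncard := by
    rw [hsplit, ← hcard]; exact hle
  have := Nat.le_of_add_le_add_left this
  rwa [Set.inter_comm] at this

lemma family_ineq (F : Finset (Set V)) (hF : ∀ S ∈ F, IsMaxIndep G S) (hne : F.Nonempty) :
    2 * indepNum G ≤ (⋃₀ (↑F : Set (Set V))).ncard + (⋂₀ (↑F : Set (Set V))).ncard := by
  classical
  induction F using Finset.induction_on with
  | empty => exact absurd hne (by simp)
  | @insert T F' hTF' ih =>
    rcases Finset.eq_empty_or_nonempty F' with rfl | hne'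
    · have hT := hF T (by simp)
      have h1 : (↑(insert T (∅ : Finset (Set V))) : Set (Set V)) = {T} := by simp
      rw [h1, Set.sUnion_singleton, Set.sInter_singleton, IsMaxIndep.ncard_eq hT]
      omega
    · have hF' : ∀ S ∈ F', IsMaxIndep G S := fun S hS => hF S (by simp [hS])
      have hT : IsMaxIndep G T := hF T (by simp)
      have IH := ih hF' hne'
      set U : Set V := ⋃₀ (↑F' : Set (Set V)) with hU
      set I : Set V := ⋂₀ (↑F' : Set (Set V)) with hI
      obtain ⟨S₁, hS₁⟩ := hne'
      have hIS₁ : I ⊆ S₁ := Set.sInter_subset_of_mem (by simpa using hS₁)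
      -- matching from I \ T into T, landing outside U
      have hhall : ∀ s : Set V, s ⊆ I \ T → s.ncard ≤ (nbhdSet G s ∩ T).ncard := by
        intro s hs
        exact card_le_nbhd_inter hT
          (fun u hu v hv hadj => (hF' S₁ hS₁).1 (hIS₁ (hs hu).1) (hIS₁ (hs hv).1) hadj)
          (fun x hx => (hs hx).2)
      obtain ⟨f, hfinj, hf⟩ := exists_matching_of_cond (T := T) (Src := I \ T) hhall
      have himg : ∀ x ∈ I \ T, f x ∈ T \ U := by
        intro x hx
        refine ⟨(hf x hx).1, ?_⟩
        rintro ⟨S', hS', hxS'⟩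
        have hS'mem : S' ∈ F' := by simpa using hS'
        have hxS : x ∈ S' := hx.1 S' (by simpa using hS')
        exact (hF' S' hS'mem).1 hxS hxS' (hf x hx).2
      have hcard1 : (I \ T).ncard ≤ (T \ U).ncard := by
        have h1 : (I \ T).ncard = (f '' (I \ T)).ncard :=
          (Set.ncard_image_of_injOn hfinj).symm
        rw [h1]
        exact Set.ncard_le_ncard (by rintro _ ⟨x, hx, rfl⟩; exact himg x hx) (Set.toFinite _)
      -- arithmetic
      have hUT : (U ∪ T).ncard = U.ncard + (T \ U).ncard := by
        rw [← Set.union_diff_self]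
        exact Set.ncard_union_eq Set.disjoint_sdiff_right (Set.toFinite _) (Set.toFinite _)
      have hIT : I.ncard = (I ∩ T).ncard + (I \ T).ncard := by
        rw [← Set.ncard_union_eq (Set.disjoint_of_subset_left Set.inter_subset_right
          Set.disjoint_sdiff_right) (Set.toFinite _) (Set.toFinite _), Set.inter_union_diff]
      simp only [Finset.coe_insert, Set.sUnion_insert, Set.sInter_insert]
      rw [← hU, ← hI]
      have e1 : (T ∪ U).ncard = (U ∪ T).ncard := by rw [Set.union_comm]
      have e2 : (T ∩ I).ncard = (I ∩ T).ncard := by rw [Set.inter_comm]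
      omega

theorem part2 (G : SimpleGraph V) :
    2 * indepNum G ≤ (coronaSet G).ncard + (coreSet G).ncard := by
  classical
  have hfin : ({S : Set V | IsMaxIndep G S}).Finite := Set.toFinite _
  obtain ⟨S₀, hS₀, -⟩ := indepNum_spec (G := G)
  have hne : hfin.toFinset.Nonempty := by
    rw [Set.Finite.toFinset_nonempty]
    exact ⟨S₀, hS₀⟩
  have hF : ∀ S ∈ hfin.toFinset, IsMaxIndep G S := fun S hS => (hfin.mem_toFinset).mp hS
  have h := family_ineq hfin.toFinset hF hne
  rwa [Set.Finite.coe_toFinset] at h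

variable {G : SimpleGraph V}





lemma nbhd_union (A B : Set V) : nbhdSet G (A ∪ B) = nbhdSet G A ∪ nbhdSet G B := by
  ext v
  constructor
  · rintro ⟨u, hu | hu, ha⟩
    · exact Or.inl ⟨u, hu, ha⟩
    · exact Or.inr ⟨u, hu, ha⟩
  · rintro (⟨u, hu, ha⟩ | ⟨u, hu, ha⟩)
    · exact ⟨u, Or.inl hu, ha⟩
    · exact ⟨u, Or.inr hu, ha⟩


lemma ncard_diff_add_ncard_inter' (s t : Set V) :
    (s \ t).ncard + (s ∩ t).ncard = s.ncard := by
  rw [← Set.ncard_union_eq (Set.disjoint_of_subset_right Set.inter_subset_right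
    Set.disjoint_sdiff_left) (Set.toFinite _) (Set.toFinite _), Set.diff_union_inter]

/-- existence of a maximum-cardinality critical independent set -/
lemma exists_maxCritical : ∃ A : Set V, IsMaxCriticalIndep G A := by
  classical
  have h1 : ∃ J : Set V, IsCriticalIndep G J := by
    obtain ⟨J, hJmem, hJmax⟩ := Set.Finite.exists_maximalFor (diffSet G)
      {J : Set V | IsIndep G J} (Set.toFinite _)
      ⟨∅, fun u hu => absurd hu (Set.notMem_empty u)⟩
    refine ⟨J, hJmem, ?_⟩
    intro J' hJ'
    by_contra hlt
    push_neg at hlt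
    exact absurd (hJmax hJ' hlt.le) (by omega)
  obtain ⟨J₀, hJ₀⟩ := h1
  obtain ⟨A, hAmem, hAmax⟩ := Set.Finite.exists_maximalFor (Set.ncard)
    {J : Set V | IsCriticalIndep G J} (Set.toFinite _) ⟨J₀, hJ₀⟩
  refine ⟨A, hAmem, ?_⟩
  intro J hJ
  by_contra hlt
  push_neg at hlt
  exact absurd (hAmax hJ hlt.le) (by omega)

/-- Zhang's observation: `W \ N(W)` is independent with no smaller difference. -/
lemma zhang (W : Set V) :
    IsIndep G (W \ nbhdSet G W) ∧ diffSet G W ≤ diffSet G (W \ nbhdSet G W) := by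
  classical
  set N := nbhdSet G W with hN
  set I := W \ N with hI
  have hind : IsIndep G I := by
    intro u hu v hv hadj
    exact hv.2 ⟨u, hu.1, hadj⟩
  refine ⟨hind, ?_⟩
  have hcard : I.ncard + (W ∩ N).ncard = W.ncard := by
    rw [hI]
    exact ncard_diff_add_ncard_inter' W N
  have hNI : nbhdSet G I ⊆ N \ (W ∩ N) := by
    intro z hz
    obtain ⟨u, hu, ha⟩ := hz
    refine ⟨nbhd_mono (show I ⊆ W from Set.diff_subset) ⟨u, hu, ha⟩, ?_⟩
    rintro ⟨hzW, -⟩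
    exact hu.2 ⟨z, hzW, ha.symm⟩
  have hN2 : (nbhdSet G I).ncard ≤ N.ncard - (W ∩ N).ncard := by
    have h3 : (N \ (W ∩ N)).ncard = N.ncard - (W ∩ N).ncard :=
      Set.ncard_diff Set.inter_subset_right (Set.toFinite _)
    rw [← h3]
    exact Set.ncard_le_ncard hNI (Set.toFinite _)
  have hWN : (W ∩ N).ncard ≤ N.ncard :=
    Set.ncard_le_ncard Set.inter_subset_right (Set.toFinite _)
  simp only [diffSet, ← hN, ← hI]
  omega

lemma diff_le_critical {J : Set V} (hJ : IsCriticalIndep G J) (W : Set V) :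
    diffSet G W ≤ diffSet G J :=
  (zhang W).2.trans (hJ.2 _ (zhang W).1)

/-- Hall-type matching from `N(J)` into `J` for a critical independent set `J`. -/
lemma critical_matching {J : Set V} (hJ : IsCriticalIndep G J) :
    ∃ f : V → V, Set.InjOn f (nbhdSet G J) ∧
      ∀ y ∈ nbhdSet G J, f y ∈ J ∧ G.Adj y (f y) := by
  classical
  apply exists_matching_of_cond
  intro Y hY
  set NY := nbhdSet G Y with hNY
  set J' := J \ NY with hJ'
  have hJ'ind : IsIndep G J' := fun u hu v hv hadj => hJ.1 hu.1 hv.1 hadj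
  have hcard : J'.ncard + (J ∩ NY).ncard = J.ncard := by
    rw [hJ']
    exact ncard_diff_add_ncard_inter' J NY
  have hsub : nbhdSet G J' ⊆ nbhdSet G J \ Y := by
    intro z hz
    obtain ⟨u, hu, ha⟩ := hz
    refine ⟨⟨u, hu.1, ha⟩, ?_⟩
    intro hzY
    exact hu.2 ⟨z, hzY, ha.symm⟩
  have hN2 : (nbhdSet G J').ncard ≤ (nbhdSet G J).ncard - Y.ncard := by
    have h3 : (nbhdSet G J \ Y).ncard = (nbhdSet G J).ncard - Y.ncard :=
      Set.ncard_diff hY (Set.toFinite _)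
    rw [← h3]
    exact Set.ncard_le_ncard hsub (Set.toFinite _)
  have hYle : Y.ncard ≤ (nbhdSet G J).ncard :=
    Set.ncard_le_ncard hY (Set.toFinite _)
  have hdle : diffSet G J' ≤ diffSet G J := hJ.2 _ hJ'ind
  simp only [diffSet] at hdle
  have : Y.ncard ≤ (J ∩ NY).ncard := by omega
  rwa [Set.inter_comm] at this

/-- The exchange set `(A \ N(J)) ∪ J` for critical independent sets `A`, `J`. -/
lemma join_critical {A J : Set V} (hA : IsCriticalIndep G A) (hJ : IsCriticalIndep G J) :
    IsCriticalIndep G ((A \ nbhdSet G J) ∪ J) ∧ A.ncard ≤ ((A \ nbhdSet G J) ∪ J).ncard ∧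
      ((A \ nbhdSet G J) ∪ J) ∩ nbhdSet G J = ∅ := by
  classical
  set NJ := nbhdSet G J with hNJ
  set W := A ∪ J with hW
  set P := A ∩ NJ with hP
  set A' := (A \ NJ) ∪ J with hA'
  have hA'W : A' = W \ P := by
    ext x
    simp only [hA', hW, hP, Set.mem_union, Set.mem_diff, Set.mem_inter_iff]
    constructor
    · rintro (⟨hxA, hxN⟩ | hxJ)
      · exact ⟨Or.inl hxA, fun h => hxN h.2⟩
      · exact ⟨Or.inr hxJ, fun h => indep_notmem_nbhd hJ.1 hxJ h.2⟩
    · rintro ⟨hxA | hxJ, hxP⟩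
      · exact Or.inl ⟨hxA, fun h => hxP ⟨hxA, h⟩⟩
      · exact Or.inr hxJ
  have hA'ind : IsIndep G A' := by
    intro u hu v hv hadj
    rcases hu with hu | hu <;> rcases hv with hv | hv
    · exact hA.1 hu.1 hv.1 hadj
    · exact hu.2 ⟨v, hv, hadj.symm⟩
    · exact hv.2 ⟨u, hu, hadj⟩
    · exact hJ.1 hu hv hadj
  obtain ⟨f, hfinj, hf⟩ := critical_matching hJ
  have hPNJ : P ⊆ NJ := Set.inter_subset_right
  -- f '' P lands in J \ A and in N(W) \ N(A')
  have hfP1 : ∀ y ∈ P, f y ∈ J \ A := by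
    intro y hy
    refine ⟨(hf y (hPNJ hy)).1, fun hfA => ?_⟩
    exact hA.1 hy.1 hfA (hf y (hPNJ hy)).2
  have hfP2 : ∀ y ∈ P, f y ∈ nbhdSet G W \ nbhdSet G A' := by
    intro y hy
    refine ⟨⟨y, Or.inl hy.1, (hf y (hPNJ hy)).2⟩, ?_⟩
    exact indep_notmem_nbhd hA'ind (Or.inr (hf y (hPNJ hy)).1)
  have hPcard1 : P.ncard ≤ (J \ A).ncard := by
    rw [show P.ncard = (f '' P).ncard from (Set.ncard_image_of_injOn
      (hfinj.mono hPNJ)).symm]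
    exact Set.ncard_le_ncard (by rintro _ ⟨y, hy, rfl⟩; exact hfP1 y hy) (Set.toFinite _)
  have hPcard2 : P.ncard ≤ (nbhdSet G W \ nbhdSet G A').ncard := by
    rw [show P.ncard = (f '' P).ncard from (Set.ncard_image_of_injOn
      (hfinj.mono hPNJ)).symm]
    exact Set.ncard_le_ncard (by rintro _ ⟨y, hy, rfl⟩; exact hfP2 y hy) (Set.toFinite _)
  have hPW : P ⊆ W := fun x hx => Or.inl hx.1
  have hcardA' : A'.ncard + P.ncard = W.ncard := by
    rw [hA'W]
    exact Set.ncard_diff_add_ncard_of_subset hPW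
  have hNsub : nbhdSet G A' ⊆ nbhdSet G W := by
    apply nbhd_mono
    rw [hA'W]; exact Set.diff_subset
  have hNcard : (nbhdSet G W \ nbhdSet G A').ncard + (nbhdSet G A').ncard
      = (nbhdSet G W).ncard := Set.ncard_diff_add_ncard_of_subset hNsub
  -- diffSet A' ≥ diffSet W
  have hdWA' : diffSet G W ≤ diffSet G A' := by
    simp only [diffSet]; omega
  -- diffSet W ≥ diffSet J  (submodularity)
  have hdW : diffSet G J ≤ diffSet G W := by
    have hNW : nbhdSet G W = nbhdSet G A ∪ nbhdSet G J := nbhd_union A J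
    have h1 : W.ncard + (A ∩ J).ncard = A.ncard + J.ncard :=
      Set.ncard_union_add_ncard_inter A J (Set.toFinite _) (Set.toFinite _)
    have h2 : (nbhdSet G W).ncard + (nbhdSet G A ∩ nbhdSet G J).ncard
        = (nbhdSet G A).ncard + (nbhdSet G J).ncard := by
      rw [hNW]
      exact Set.ncard_union_add_ncard_inter _ _ (Set.toFinite _) (Set.toFinite _)
    have h3 : nbhdSet G (A ∩ J) ⊆ nbhdSet G A ∩ nbhdSet G J := by
      intro z hz
      obtain ⟨u, hu, ha⟩ := hz
      exact ⟨⟨u, hu.1, ha⟩, ⟨u, hu.2, ha⟩⟩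
    have h4 : (nbhdSet G (A ∩ J)).ncard ≤ (nbhdSet G A ∩ nbhdSet G J).ncard :=
      Set.ncard_le_ncard h3 (Set.toFinite _)
    have h5 : diffSet G (A ∩ J) ≤ diffSet G A :=
      hA.2 _ (fun u hu v hv hadj => hA.1 hu.1 hv.1 hadj)
    have h6 : diffSet G A ≤ diffSet G J := hJ.2 _ hA.1
    have h7 : diffSet G J ≤ diffSet G A := hA.2 _ hJ.1
    simp only [diffSet] at h5 h6 h7 ⊢
    omega
  have hcrit : IsCriticalIndep G A' := by
    refine ⟨hA'ind, fun J' hJ' => ?_⟩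
    exact (hJ.2 _ hJ').trans (hdW.trans hdWA')
  have hWA : W.ncard = A.ncard + (J \ A).ncard := by
    have : W = A ∪ (J \ A) := by rw [hW, Set.union_diff_self]
    rw [this, Set.ncard_union_eq Set.disjoint_sdiff_right (Set.toFinite _) (Set.toFinite _)]
  have hcard2 : A.ncard ≤ A'.ncard := by omega
  have hdisj : A' ∩ NJ = ∅ := by
    ext x
    simp only [Set.mem_inter_iff, Set.mem_empty_iff_false, iff_false, not_and]
    rintro (hx | hx)
    · exact fun h => hx.2 h
    · exact fun h => indep_notmem_nbhd hJ.1 hx h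
  exact ⟨hcrit, hcard2, hdisj⟩




theorem part1 (G : SimpleGraph V) :
    (nucleusSet G).ncard + (diademSet G).ncard ≤ 2 * indepNum G := by
  classical
  obtain ⟨A, hA⟩ := exists_maxCritical (G := G)
  have hnucA : nucleusSet G ⊆ A := Set.sInter_subset_of_mem hA
  obtain ⟨f, hfinj, hf⟩ := critical_matching hA.1
  have key : ∀ v ∈ diademSet G \ A,
      v ∈ nbhdSet G A ∧ ∀ w, G.Adj v w → w ∉ nucleusSet G := by
    intro v hv
    obtain ⟨J, hJcrit, hvJ⟩ := hv.1
    simp only [Set.mem_setOf_eq] at hJcrit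
    obtain ⟨hBcrit, hBcard, hBdisj⟩ := join_critical hA.1 hJcrit
    set B := (A \ nbhdSet G J) ∪ J with hB
    have hBmax : IsMaxCriticalIndep G B :=
      ⟨hBcrit, fun J' hJ' => (hA.2 J' hJ').trans hBcard⟩
    have hvB : v ∈ B := Or.inr hvJ
    -- step 1: v ∈ N(A)
    obtain ⟨hCcrit, -, -⟩ := join_critical hBcrit hA.1
    set C := (B \ nbhdSet G A) ∪ A with hC
    have hCcard : C.ncard ≤ A.ncard := hA.2 C hCcrit
    have hCsplit : C = A ∪ ((B \ nbhdSet G A) \ A) := by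
      rw [hC, Set.union_comm, Set.union_diff_self]
    have hCn : C.ncard = A.ncard + ((B \ nbhdSet G A) \ A).ncard := by
      rw [hCsplit]
      exact Set.ncard_union_eq Set.disjoint_sdiff_right (Set.toFinite _) (Set.toFinite _)
    have hempty : ((B \ nbhdSet G A) \ A) = ∅ := by
      rw [← Set.ncard_eq_zero (Set.toFinite _)]
      omega
    have hvNA : v ∈ nbhdSet G A := by
      by_contra hvn
      have : v ∈ (B \ nbhdSet G A) \ A := ⟨⟨hvB, hvn⟩, hv.2⟩
      rw [hempty] at this
      exact this
    refine ⟨hvNA, ?_⟩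
    -- step 2: neighbours of v avoid the nucleus
    intro w hw hwnuc
    have hwB : w ∈ nbhdSet G J := ⟨v, hvJ, hw⟩
    have hwB2 : w ∈ B := Set.sInter_subset_of_mem hBmax hwnuc
    have : w ∈ B ∩ nbhdSet G J := ⟨hwB2, hwB⟩
    rw [hBdisj] at this
    exact this
  have himg : ∀ v ∈ diademSet G \ A, f v ∈ A \ nucleusSet G := by
    intro v hv
    refine ⟨(hf v (key v hv).1).1, ?_⟩
    exact (key v hv).2 (f v) (hf v (key v hv).1).2
  have h2 : (diademSet G \ A).ncard ≤ (A \ nucleusSet G).ncard := by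
    rw [show (diademSet G \ A).ncard = (f '' (diademSet G \ A)).ncard from
      (Set.ncard_image_of_injOn (hfinj.mono (fun v hv => (key v hv).1))).symm]
    exact Set.ncard_le_ncard (by rintro _ ⟨v, hv, rfl⟩; exact himg v hv) (Set.toFinite _)
  have h1 : (diademSet G \ A).ncard + (diademSet G ∩ A).ncard = (diademSet G).ncard :=
    ncard_diff_add_ncard_inter' _ _
  have h3 : (A \ nucleusSet G).ncard + (nucleusSet G).ncard = A.ncard :=
    Set.ncard_diff_add_ncard_of_subset hnucA
  have h4 : (diademSet G ∩ A).ncard ≤ A.ncard :=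
    Set.ncard_le_ncard Set.inter_subset_right (Set.toFinite _)
  have h5 : A.ncard ≤ indepNum G := ncard_le_indepNum hA.1.1
  omega


open SimpleGraph

lemma last_edge_not_mem {H : SimpleGraph V} {y v : V} (q : H.Walk y v)
    (hq : q.support.Nodup) (hlen : 2 ≤ q.length) : s(v, y) ∉ q.edges := by
  cases q with
  | nil => simp at hlen
  | @cons _ y' _ h' q' =>
    intro hmem
    rw [Walk.edges_cons, List.mem_cons] at hmem
    rw [Walk.support_cons, List.nodup_cons] at hq
    have hyq' : y ∉ q'.support := hq.1
    rcases hmem with heq | hmem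
    · rw [Sym2.eq_iff] at heq
      rcases heq with ⟨hv, hy⟩ | ⟨hv, hy⟩
      · subst hv
        exact hyq' q'.end_mem_support
      · subst hv
        have : q'.IsPath := (Walk.isPath_def _).mpr hq.2
        rw [Walk.isPath_iff_eq_nil] at this
        subst this
        simp at hlen
    · rw [Sym2.eq_swap] at hmem
      exact hyq' (q'.fst_mem_support_of_mem_edges hmem)

/-- every odd closed walk contains an odd cycle -/
lemma odd_closed_walk_to_odd_cycle {H : SimpleGraph V} :
    ∀ (n : ℕ) {v : V} (w : H.Walk v v), w.length ≤ n → Odd w.length →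
    ∃ (u : V) (c : H.Walk u u), c.IsCycle ∧ Odd c.length ∧
      ∀ x ∈ c.support, x ∈ w.support := by
  intro n
  induction n with
  | zero =>
    intro v w hl hodd
    interval_cases h : w.length
    · simp [Nat.odd_iff] at hodd
  | succ n ih =>
    intro v w hl hodd
    by_cases hdup : w.support.tail.Nodup
    · -- w is itself a cycle
      cases w with
      | nil => simp [Nat.odd_iff] at hodd
      | @cons _ y _ h q =>
        rw [Walk.support_cons, List.tail_cons] at hdup
        have hq : q.IsPath := (Walk.isPath_def _).mpr hdup
        have hlen2 : 2 ≤ q.length := by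
          rcases Nat.lt_or_ge q.length 2 with h2 | h2
          · interval_cases hh : q.length
            · exact absurd (Walk.eq_of_length_eq_zero hh) (H.ne_of_adj h).symm
            · exfalso
              rw [Walk.length_cons, hh] at hodd
              simp [Nat.odd_iff] at hodd
          · exact h2
        refine ⟨v, Walk.cons h q, ?_, hodd, fun x hx => hx⟩
        rw [Walk.cons_isCycle_iff]
        exact ⟨hq, last_edge_not_mem q hdup hlen2⟩
    · -- find a repeated vertex and split
      obtain ⟨x, hxcount⟩ : ∃ x, 2 ≤ w.support.tail.count x := by
        by_contra hc
        push_neg at hc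
        exact hdup (List.nodup_iff_count_le_one.mpr fun x => by
          have := hc x; omega)
      have hx : x ∈ w.support := List.mem_of_mem_tail (List.count_pos_iff.mp (by omega))
      set w' := w.rotate x hx with hw'
      have hlen' : w'.length = w.length := by
        have := (Walk.rotate_edges w x hx).perm.length_eq
        rwa [Walk.length_edges, Walk.length_edges] at this
      have hcount' : 2 ≤ w'.support.tail.count x := by
        rw [(Walk.support_rotate w x hx).perm.count_eq]
        exact hxcount
      have hsupp' : ∀ z ∈ w'.support, z ∈ w.support := by
        intro z hz
        rw [Walk.support_eq_cons, List.mem_cons] at hz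
        rcases hz with rfl | hz
        · exact hx
        · exact List.mem_of_mem_tail
            (((Walk.support_rotate w x hx).perm.mem_iff).mp hz)
      -- split w' at the second occurrence of x
      cases hw'c : w' with
      | nil =>
        rw [hw'c] at hlen'
        simp only [Walk.length_nil] at hlen'
        rw [← hlen'] at hodd
        simp [Nat.odd_iff] at hodd
      | @cons _ y _ h q =>
        rw [hw'c] at hcount' hsupp' hlen'
        rw [Walk.support_cons, List.tail_cons] at hcount'
        have hxq : x ∈ q.support := List.count_pos_iff.mp (by omega)
        have hspec := q.take_spec hxq
        have hlenq : (q.takeUntil x hxq).length + (q.dropUntil x hxq).length = q.length := by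
          rw [← Walk.length_append, hspec]
        have hcount1 : (q.takeUntil x hxq).support.count x = 1 :=
          q.count_support_takeUntil_eq_one hxq
        have hc2ne : (q.dropUntil x hxq).length ≠ 0 := by
          intro h0
          rw [Walk.length_eq_zero_iff, Walk.nil_iff_eq_nil] at h0
          rw [h0, Walk.append_nil] at hspec
          rw [hspec] at hcount1
          omega
        have hwlen : w.length = q.length + 1 := by
          rw [← hlen', Walk.length_cons]
        -- the two closed subwalks
        have hsub1 : ∀ z ∈ (Walk.cons h (q.takeUntil x hxq)).support, z ∈ w.support := by
          intro z hz
          rw [Walk.support_cons, List.mem_cons] at hz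
          rcases hz with rfl | hz
          · exact hx
          · exact hsupp' z (by
              rw [Walk.support_cons]
              exact List.mem_cons_of_mem _ (q.support_takeUntil_subset hxq hz))
        have hsub2 : ∀ z ∈ (q.dropUntil x hxq).support, z ∈ w.support := by
          intro z hz
          exact hsupp' z (by
            rw [Walk.support_cons]
            exact List.mem_cons_of_mem _ (q.support_dropUntil_subset hxq hz))
        rcases Nat.even_or_odd (q.dropUntil x hxq).length with hev | hod
        · -- then the cons-walk is odd
          have hodd1 : Odd (Walk.cons h (q.takeUntil x hxq)).length := by
            rw [Walk.length_cons]
            rcases hev with ⟨k, hk⟩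
            rcases hodd with ⟨m, hm⟩
            refine ⟨m - k, by omega⟩
          have hle1 : (Walk.cons h (q.takeUntil x hxq)).length ≤ n := by
            rw [Walk.length_cons]; omega
          obtain ⟨u, c, hc1, hc2, hc3⟩ := ih _ hle1 hodd1
          exact ⟨u, c, hc1, hc2, fun z hz => hsub1 z (hc3 z hz)⟩
        · have hle2 : (q.dropUntil x hxq).length ≤ n := by omega
          obtain ⟨u, c, hc1, hc2, hc3⟩ := ih _ hle2 hod
          exact ⟨u, c, hc1, hc2, fun z hz => hsub2 z (hc3 z hz)⟩

open Classical in
/-- either a graph has a proper 2-colouring or it has an odd closed walk -/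
lemma coloring_or_odd_walk (H : SimpleGraph V) :
    (∃ c : V → Bool, ∀ u v : V, H.Adj u v → c u ≠ c v) ∨
    (∃ (v : V) (w : H.Walk v v), Odd w.length) := by
  set c : V → Bool := fun v =>
    decide (∃ w : H.Walk (Quot.out (H.connectedComponentMk v)) v, Even w.length) with hc
  by_cases hproper : ∀ u v : V, H.Adj u v → c u ≠ c v
  · exact Or.inl ⟨c, hproper⟩
  · right
    push_neg at hproper
    obtain ⟨u, v, hadj, hcuv⟩ := hproper
    have hcomp : H.connectedComponentMk u = H.connectedComponentMk v :=
      SimpleGraph.ConnectedComponent.sound hadj.reachable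
    set r := Quot.out (H.connectedComponentMk u) with hr
    have hru : H.Reachable r u := by
      apply SimpleGraph.ConnectedComponent.exact
      rw [hr]
      exact Quot.out_eq _
    have hrv : H.Reachable r v := hru.trans hadj.reachable
    have hcv : (Quot.out (H.connectedComponentMk v)) = r := by rw [← hcomp, ← hr]
    cases hu : c u with
    | true =>
      have hv : c v = true := by rw [← hcuv, hu]
      rw [hc] at hu hv
      simp only [decide_eq_true_eq] at hu hv
      obtain ⟨w₁, hw₁⟩ := hu
      obtain ⟨w₂0, hw₂0⟩ := hv
      set w₂ := w₂0.copy hcv rfl with hw₂def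
      have hw₂ : Even w₂.length := by
        rw [hw₂def, SimpleGraph.Walk.length_copy]; exact hw₂0
      exact ⟨r, w₁.append (SimpleGraph.Walk.cons hadj w₂.reverse), by
        rw [SimpleGraph.Walk.length_append, SimpleGraph.Walk.length_cons,
          SimpleGraph.Walk.length_reverse]
        rcases hw₁ with ⟨a, ha⟩
        rcases hw₂ with ⟨b, hb⟩
        exact ⟨a + b, by omega⟩⟩
    | false =>
      have hv : c v = false := by rw [← hcuv, hu]
      rw [hc] at hu hv
      simp only [decide_eq_false_iff_not] at hu hv
      obtain ⟨w₁⟩ := hru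
      obtain ⟨w₂⟩ := hrv
      have hw₁ : Odd w₁.length := by
        rcases Nat.even_or_odd w₁.length with he | ho
        · exact absurd ⟨w₁, he⟩ hu
        · exact ho
      have hw₂ : Odd w₂.length := by
        rcases Nat.even_or_odd w₂.length with he | ho
        · refine absurd ⟨w₂.copy hcv.symm rfl, ?_⟩ hv
          rw [SimpleGraph.Walk.length_copy]; exact he
        · exact ho
      exact ⟨r, w₁.append (SimpleGraph.Walk.cons hadj w₂.reverse), by
        rw [SimpleGraph.Walk.length_append, SimpleGraph.Walk.length_cons,
          SimpleGraph.Walk.length_reverse]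
        rcases hw₁ with ⟨a, ha⟩
        rcases hw₂ with ⟨b, hb⟩
        exact ⟨a + b + 1, by omega⟩⟩


open SimpleGraph


/-- the restriction of `G` to vertex set `A` (as a graph on `V`) -/
def restrG (G : SimpleGraph V) (A : Set V) : SimpleGraph V where
  Adj u v := G.Adj u v ∧ u ∈ A ∧ v ∈ A
  symm := ⟨by rintro u v ⟨h, ha, hb⟩; exact ⟨h.symm, hb, ha⟩⟩
  loopless := ⟨by rintro u ⟨h, _, _⟩; exact G.irrefl h⟩

lemma restr_le (G : SimpleGraph V) (A : Set V) : restrG G A ≤ G := fun _ _ h => h.1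

lemma restr_support_subset {G : SimpleGraph V} {A : Set V} :
    ∀ {a b : V} (w : (restrG G A).Walk a b), w.length ≠ 0 → ∀ x ∈ w.support, x ∈ A := by
  intro a b w
  induction w with
  | nil => intro h; simp at h
  | @cons a' y b' h q ih =>
    intro _ x hx
    rw [Walk.support_cons, List.mem_cons] at hx
    rcases hx with rfl | hx
    · exact h.2.1
    · rcases Nat.eq_zero_or_pos q.length with hq0 | hq0
      · have hsupp : q.support = [y] := by
          have h1 := q.length_support
          rw [hq0] at h1
          rw [Walk.support_eq_cons]
          have : q.support.tail.length = 0 := by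
            have := q.length_support
            rw [Walk.support_eq_cons] at this
            simp only [List.length_cons] at this
            omega
          rw [List.length_eq_zero_iff] at this
          rw [this]
        rw [hsupp] at hx
        simp only [List.mem_singleton] at hx
        subst hx
        exact h.2.2
      · exact ih (by omega) x hx

/-- Odd cycle transversal bounded by the number of odd-cycle vertex sets. -/
lemma oct (G : SimpleGraph V) :
    ∀ (n : ℕ) (A : Set V), A.ncard ≤ n →
    ∃ E : Set V, E ⊆ A ∧
      E.ncard ≤ {W : Set V | IsOddCycleVertexSet G W ∧ W ⊆ A}.ncard ∧
      (∃ c : V → Bool, ∀ u ∈ A \ E, ∀ v ∈ A \ E, G.Adj u v → c u ≠ c v) ∧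
      (∀ u ∈ E, ∃ y ∈ A, G.Adj u y) := by
  intro n
  induction n with
  | zero =>
    intro A hA
    refine ⟨∅, Set.empty_subset _, by simp, ?_, by simp⟩
    have hAe : A = ∅ := by
      rwa [← Set.ncard_eq_zero (Set.toFinite _), ← Nat.le_zero]
    rcases coloring_or_odd_walk (restrG G A) with ⟨c, hc⟩ | ⟨v, w, hodd⟩
    · exact ⟨c, fun u hu v hv hadj => hc u v ⟨hadj, hu.1, hv.1⟩⟩
    · exfalso
      cases w with
      | nil => simp [Nat.odd_iff] at hodd
      | cons h q => rw [hAe] at h; exact h.2.1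
  | succ n ih =>
    intro A hA
    rcases coloring_or_odd_walk (restrG G A) with ⟨c, hc⟩ | ⟨v, w, hodd⟩
    · exact ⟨∅, Set.empty_subset _, by simp,
        ⟨c, fun u hu v hv hadj => hc u v ⟨hadj, hu.1, hv.1⟩⟩, by simp⟩
    · obtain ⟨u, cyc, hcyc, hcodd, hcsup⟩ :=
        odd_closed_walk_to_odd_cycle w.length w le_rfl hodd
      have hlen0 : cyc.length ≠ 0 := by
        rcases hcodd with ⟨k, hk⟩; omega
      have hsupA : ∀ x ∈ cyc.support, x ∈ A := restr_support_subset cyc hlen0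
      have huA : u ∈ A := hsupA u cyc.start_mem_support
      -- the odd cycle as a G-cycle
      set cg := cyc.mapLe (restr_le G A) with hcg
      have hcgcyc : cg.IsCycle := hcyc.mapLe _
      have hcglen : Odd cg.length := by
        rw [hcg]
        simpa [Walk.mapLe, Walk.length_map] using hcodd
      have hcgsup : {x | x ∈ cg.support} = {x | x ∈ cyc.support} := by
        rw [hcg]
        ext x
        simp only [Walk.mapLe, Walk.support_map, List.mem_map, Set.mem_setOf_eq]
        constructor
        · rintro ⟨a, ha, rfl⟩
          exact ha
        · intro hx
          exact ⟨x, hx, rfl⟩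
      set W : Set V := {x | x ∈ cyc.support} with hW
      have hWodd : IsOddCycleVertexSet G W := ⟨u, cg, hcgcyc, hcglen, hcgsup⟩
      have hWA : W ⊆ A := fun x hx => hsupA x hx
      have huW : u ∈ W := cyc.start_mem_support
      -- strict decrease of the cycle count
      have hstrict : {W' : Set V | IsOddCycleVertexSet G W' ∧ W' ⊆ A \ {u}}.ncard <
          {W' : Set V | IsOddCycleVertexSet G W' ∧ W' ⊆ A}.ncard := by
        apply Set.ncard_lt_ncard _ (Set.toFinite _)
        constructor
        · rintro W' ⟨h1, h2⟩
          exact ⟨h1, h2.trans Set.diff_subset⟩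
        · intro hcon
          have := hcon ⟨hWodd, hWA⟩
          exact (this.2 huW).2 rfl
      have hAn : (A \ {u}).ncard ≤ n := by
        have := Set.ncard_diff_singleton_add_one huA (Set.toFinite _)
        omega
      obtain ⟨E', hE'sub, hE'card, ⟨c, hcol⟩, hnbr⟩ := ih (A \ {u}) hAn
      refine ⟨insert u E', ?_, ?_, ⟨c, ?_⟩, ?_⟩
      · rw [Set.insert_subset_iff]
        exact ⟨huA, hE'sub.trans Set.diff_subset⟩
      · calc (insert u E').ncard ≤ E'.ncard + 1 := Set.ncard_insert_le _ _
          _ ≤ {W' : Set V | IsOddCycleVertexSet G W' ∧ W' ⊆ A \ {u}}.ncard + 1 := by omega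
          _ ≤ {W' : Set V | IsOddCycleVertexSet G W' ∧ W' ⊆ A}.ncard := by omega
      · intro x hx y hy hadj
        have hxd : x ∈ (A \ {u}) \ E' := by
          refine ⟨⟨hx.1, fun hxu => hx.2 (by rw [hxu]; exact Set.mem_insert _ _)⟩, ?_⟩
          exact fun hxe => hx.2 (Set.mem_insert_of_mem _ hxe)
        have hyd : y ∈ (A \ {u}) \ E' := by
          refine ⟨⟨hy.1, fun hyu => hy.2 (by rw [hyu]; exact Set.mem_insert _ _)⟩, ?_⟩
          exact fun hye => hy.2 (Set.mem_insert_of_mem _ hye)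
        exact hcol x hxd y hyd hadj
      · intro x hx
        rcases Set.mem_insert_iff.mp hx with rfl | hx
        · -- x = u : use the first edge of the cycle
          cases cyc with
          | nil => simp at hlen0
          | cons h q => exact ⟨_, h.2.2, h.1⟩
        · obtain ⟨y, hy, hadj⟩ := hnbr x hx
          exact ⟨y, hy.1, hadj⟩





theorem part3 (G : SimpleGraph V) :
    (coronaSet G).ncard + (coreSet G).ncard ≤
      2 * _root_.indepNum G + numVertexDistinctOddCycles G := by
  classical
  obtain ⟨S₀, hS₀, -⟩ := indepNum_spec (G := G)
  have hcoreS : coreSet G ⊆ S₀ := Set.sInter_subset_of_mem hS₀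
  have hScorona : S₀ ⊆ coronaSet G := Set.subset_sUnion_of_mem hS₀
  have hiso : ∀ u ∈ coreSet G, ∀ v ∈ coronaSet G, ¬ G.Adj u v := by
    intro u hu v hv hadj
    obtain ⟨T, hT, hvT⟩ := hv
    simp only [Set.mem_setOf_eq] at hT
    exact hT.1 (hu T hT) hvT hadj
  obtain ⟨E, hEsub, hEcard, ⟨c, hcol⟩, hEnbr⟩ :=
    oct G (coronaSet G).ncard (coronaSet G) le_rfl
  have hEcore : ∀ u ∈ E, u ∉ coreSet G := by
    intro u hu hcore
    obtain ⟨y, hy, hadj⟩ := hEnbr u hu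
    exact hiso u hcore y hy hadj
  set P₁ : Set V := ((coronaSet G \ E) ∩ {v | c v = true}) ∪
    (coreSet G ∩ {v | c v = false}) with hP₁
  set P₂ : Set V := ((coronaSet G \ E) ∩ {v | c v = false}) ∪
    (coreSet G ∩ {v | c v = true}) with hP₂
  have hind₁ : IsIndep G P₁ := by
    rintro x (⟨hx1, hx2⟩ | ⟨hx1, hx2⟩) y (⟨hy1, hy2⟩ | ⟨hy1, hy2⟩) hadj
    · exact hcol x hx1 y hy1 hadj (by rw [hx2, hy2])
    · exact hiso y hy1 x hx1.1 hadj.symm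
    · exact hiso x hx1 y hy1.1 hadj
    · exact hS₀.1 (hcoreS hx1) (hcoreS hy1) hadj
  have hind₂ : IsIndep G P₂ := by
    rintro x (⟨hx1, hx2⟩ | ⟨hx1, hx2⟩) y (⟨hy1, hy2⟩ | ⟨hy1, hy2⟩) hadj
    · exact hcol x hx1 y hy1 hadj (by rw [hx2, hy2])
    · exact hiso y hy1 x hx1.1 hadj.symm
    · exact hiso x hx1 y hy1.1 hadj
    · exact hS₀.1 (hcoreS hx1) (hcoreS hy1) hadj
  have hcover : coronaSet G \ E ⊆ P₁ ∪ P₂ := by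
    intro x hx
    cases hcx : c x with
    | true => exact Or.inl (Or.inl ⟨hx, hcx⟩)
    | false => exact Or.inr (Or.inl ⟨hx, hcx⟩)
  have hcoreP : coreSet G ⊆ P₁ ∩ P₂ := by
    intro x hx
    have hxcor : x ∈ coronaSet G \ E := ⟨hScorona (hcoreS hx), fun hxe => hEcore x hxe hx⟩
    cases hcx : c x with
    | true => exact ⟨Or.inl ⟨hxcor, hcx⟩, Or.inr ⟨hx, hcx⟩⟩
    | false => exact ⟨Or.inr ⟨hx, hcx⟩, Or.inl ⟨hxcor, hcx⟩⟩
  have h1 : (coronaSet G \ E).ncard + E.ncard = (coronaSet G).ncard :=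
    Set.ncard_diff_add_ncard_of_subset hEsub
  have h2 : (coronaSet G \ E).ncard ≤ (P₁ ∪ P₂).ncard :=
    Set.ncard_le_ncard hcover (Set.toFinite _)
  have h3 : (coreSet G).ncard ≤ (P₁ ∩ P₂).ncard :=
    Set.ncard_le_ncard hcoreP (Set.toFinite _)
  have h4 : (P₁ ∪ P₂).ncard + (P₁ ∩ P₂).ncard = P₁.ncard + P₂.ncard :=
    Set.ncard_union_add_ncard_inter _ _ (Set.toFinite _) (Set.toFinite _)
  have h5 : P₁.ncard ≤ _root_.indepNum G := ncard_le_indepNum hind₁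
  have h6 : P₂.ncard ≤ _root_.indepNum G := ncard_le_indepNum hind₂
  have h7 : {W : Set V | IsOddCycleVertexSet G W ∧ W ⊆ coronaSet G}.ncard ≤
      numVertexDistinctOddCycles G := by
    apply Set.ncard_le_ncard _ (Set.toFinite _)
    rintro W ⟨h, -⟩
    exact h
  omega


end ChainProof

/-- For every finite simple graph `G`,
`|nucleus(G)| + |diadem(G)| ≤ 2·α(G) ≤ |corona(G)| + |core(G)| ≤ 2·α(G) + k`,
where `k` is the maximum cardinality of a set of pairwise vertex-distinct odd
cycles of `G`. -/
theorem nucleus_diadem_alpha_corona_core_chain (G : SimpleGraph V) :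
    (nucleusSet G).ncard + (diademSet G).ncard ≤ 2 * indepNum G ∧
    2 * indepNum G ≤ (coronaSet G).ncard + (coreSet G).ncard ∧
    (coronaSet G).ncard + (coreSet G).ncard ≤
      2 * indepNum G + numVertexDistinctOddCycles G :=
  ⟨ChainProof.part1 G, ChainProof.part2 G, ChainProof.part3 G⟩
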